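/- Let u₁, ..., u_n be unit vectors in ℝ^N (N ≥ 2), let z ∈ ℝ^N with |z| ≤ 1 − 2b for b ∈ (0, 1/2), and set η = |(1/n)Σᵢ uᵢ − z|. Suppose also |(1/n)Σᵢ uᵢ| ≤ 1 − 2b. Choose c > 0 with √(4 − 2b) < 2 − c and set P = ⌊ηn/c⌋ + 1, and assume B·n > 2⌊ηn/c⌋ + 1 where B = b/(4 − 2b). Then there exists a family (v₁, ..., v_n) of unit vectors differing from (u₁, ..., u_n) in at most 2P indices such that (1/n)Σᵢ vᵢ = z exactly. -/

import Mathlib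

open RealInnerProductSpace

-- perpendicular unit vector
lemma exists_unit_perp {N : ℕ} (hN : 2 ≤ N) (w : EuclideanSpace ℝ (Fin N)) :
    ∃ p : EuclideanSpace ℝ (Fin N), ‖p‖ = 1 ∧ ⟪w, p⟫ = 0 := by
  by_cases hw : w = 0
  · refine ⟨EuclideanSpace.single (⟨0, by omega⟩ : Fin N) (1:ℝ), ?_, ?_⟩
    · simp [EuclideanSpace.norm_single]
    · simp [hw]
  · have hfr : Module.finrank ℝ (EuclideanSpace ℝ (Fin N)) = N := by
      simp [finrank_euclideanSpace]
    have h1 : Module.finrank ℝ (ℝ ∙ w) = 1 := finrank_span_singleton hw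
    have h2 : Module.finrank ℝ (ℝ ∙ w) + Module.finrank ℝ (ℝ ∙ w)ᗮ = N := by
      rw [Submodule.finrank_add_finrank_orthogonal, hfr]
    have hpos : 0 < Module.finrank ℝ (ℝ ∙ w)ᗮ := by omega
    have hne : (ℝ ∙ w)ᗮ ≠ ⊥ := by
      intro h
      rw [h, finrank_bot] at hpos
      exact lt_irrefl 0 hpos
    obtain ⟨q, hq, hq0⟩ := Submodule.exists_mem_ne_zero_of_ne_bot hne
    refine ⟨‖q‖⁻¹ • q, ?_, ?_⟩
    · have : ‖q‖ ≠ 0 := norm_ne_zero_iff.mpr hq0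
      rw [norm_smul]; simp [this]
    · have : ⟪w, q⟫ = 0 := by
        have := Submodule.inner_right_of_mem_orthogonal (Submodule.mem_span_singleton_self w) hq
        exact this
      rw [real_inner_smul_right, this, mul_zero]

-- any vector of norm ≤ 2 is sum of two unit vectors
lemma exists_two_unit {N : ℕ} (hN : 2 ≤ N) (w : EuclideanSpace ℝ (Fin N)) (hw : ‖w‖ ≤ 2) :
    ∃ a b : EuclideanSpace ℝ (Fin N), ‖a‖ = 1 ∧ ‖b‖ = 1 ∧ a + b = w := by
  obtain ⟨p, hp1, hp0⟩ := exists_unit_perp hN w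
  set t : ℝ := Real.sqrt (1 - ‖w‖^2/4) with ht
  have hwn : (0:ℝ) ≤ ‖w‖ := norm_nonneg w
  have hnn : (0:ℝ) ≤ 1 - ‖w‖^2/4 := by nlinarith
  have ht2 : t^2 = 1 - ‖w‖^2/4 := Real.sq_sqrt hnn
  refine ⟨(1/2:ℝ) • w + t • p, (1/2:ℝ) • w - t • p, ?_, ?_, by module⟩
  · have h : ‖(1/2:ℝ) • w + t • p‖^2 = 1 := by
      rw [norm_add_sq_real]
      rw [real_inner_smul_left, real_inner_smul_right, hp0]
      rw [norm_smul, norm_smul, hp1]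
      simp
      nlinarith [abs_nonneg t, sq_abs t, sq_abs (1/2:ℝ)]
    nlinarith [norm_nonneg ((1/2:ℝ) • w + t • p)]
  · have h : ‖(1/2:ℝ) • w - t • p‖^2 = 1 := by
      rw [norm_sub_sq_real]
      rw [real_inner_smul_left, real_inner_smul_right, hp0]
      rw [norm_smul, norm_smul, hp1]
      simp
      nlinarith [abs_nonneg t, sq_abs t, sq_abs (1/2:ℝ)]
    nlinarith [norm_nonneg ((1/2:ℝ) • w - t • p)]

-- a vector of norm ≤ 2k is the sum of 2k unit vectors indexed by any finset of card 2k
lemma exists_unit_family {N n : ℕ} (hN : 2 ≤ N) :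
    ∀ (k : ℕ) (S : Finset (Fin n)) (w : EuclideanSpace ℝ (Fin N)),
      S.card = 2 * k → ‖w‖ ≤ 2 * k →
      ∃ f : Fin n → EuclideanSpace ℝ (Fin N),
        (∀ i, ‖f i‖ = 1) ∧ ∑ i ∈ S, f i = w := by
  intro k
  induction k with
  | zero =>
    intro S w hS hw
    have hS0 : S = ∅ := Finset.card_eq_zero.mp (by simpa using hS)
    have hw0 : w = 0 := by
      have : ‖w‖ ≤ 0 := by simpa using hw
      exact norm_le_zero_iff.mp this
    exact ⟨fun _ => EuclideanSpace.single (⟨0, by omega⟩ : Fin N) (1:ℝ),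
      fun _ => by simp [EuclideanSpace.norm_single], by simp [hS0, hw0]⟩
  | succ k ih =>
    intro S w hS hw
    have hpos : 0 < S.card := by omega
    obtain ⟨i, hi⟩ := Finset.card_pos.mp hpos
    have hpos2 : 0 < (S.erase i).card := by
      rw [Finset.card_erase_of_mem hi]; omega
    obtain ⟨j, hj⟩ := Finset.card_pos.mp hpos2
    have hji : j ≠ i := Finset.ne_of_mem_erase hj
    set S' := (S.erase i).erase j with hS'
    have hS'card : S'.card = 2 * k := by
      rw [hS', Finset.card_erase_of_mem hj, Finset.card_erase_of_mem hi]; omega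
    have hk1 : (0:ℝ) < (k:ℝ) + 1 := by positivity
    set w' : EuclideanSpace ℝ (Fin N) := ((k:ℝ)/((k:ℝ)+1)) • w with hw'
    have hw'norm : ‖w'‖ ≤ 2 * k := by
      rw [hw', norm_smul]
      have : |(k:ℝ)/((k:ℝ)+1)| = (k:ℝ)/((k:ℝ)+1) := abs_of_nonneg (by positivity)
      rw [Real.norm_eq_abs, this]
      rw [div_mul_eq_mul_div, div_le_iff₀ hk1]
      have hw2 : ‖w‖ ≤ 2 * (k+1) := by push_cast at hw ⊢; linarith
      nlinarith [norm_nonneg w, Nat.cast_nonneg (α := ℝ) k]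
    have hrnorm : ‖w - w'‖ ≤ 2 := by
      have he : w - w' = ((1:ℝ) - (k:ℝ)/((k:ℝ)+1)) • w := by
        rw [hw', sub_smul, one_smul]
      have hc : (1:ℝ) - (k:ℝ)/((k:ℝ)+1) = 1/((k:ℝ)+1) := by field_simp; ring
      rw [he, hc, norm_smul, Real.norm_eq_abs, abs_of_nonneg (by positivity : (0:ℝ) ≤ 1/((k:ℝ)+1))]
      rw [div_mul_eq_mul_div, one_mul, div_le_iff₀ hk1]
      have hw2 : ‖w‖ ≤ 2 * ((k:ℝ)+1) := by push_cast at hw ⊢; linarith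
      linarith
    obtain ⟨a, bb, ha, hbb, hab⟩ := exists_two_unit hN (w - w') hrnorm
    obtain ⟨f', hf'1, hf'2⟩ := ih S' w' hS'card hw'norm
    have hiS' : i ∉ S' := by
      rw [hS']
      intro h
      exact (Finset.notMem_erase i S) (Finset.mem_of_mem_erase h)
    have hjS' : j ∉ S' := Finset.notMem_erase j _
    refine ⟨fun x => if x = i then a else if x = j then bb else f' x, ?_, ?_⟩
    · intro x
      by_cases h1 : x = i
      · simp [h1, ha]
      · by_cases h2 : x = j
        · simp [h1, h2, hji, hbb]
        · simp [h1, h2, hf'1 x]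
    · have hSdecomp : S = insert i (insert j S') := by
        rw [hS', Finset.insert_erase hj, Finset.insert_erase hi]
      have hiins : i ∉ insert j S' := by
        simp only [Finset.mem_insert]
        push_neg
        exact ⟨fun h => hji h.symm, hiS'⟩
      rw [hSdecomp, Finset.sum_insert hiins, Finset.sum_insert hjS']
      have hrest : ∑ x ∈ S', (if x = i then a else if x = j then bb else f' x) = w' := by
        rw [← hf'2]
        apply Finset.sum_congr rfl
        intro x hx
        have hx1 : x ≠ i := fun h => hiS' (h ▸ hx)
        have hx2 : x ≠ j := fun h => hjS' (h ▸ hx)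
        simp [hx1, hx2]
      rw [hrest, if_pos rfl, if_neg hji, if_pos rfl, ← add_assoc, hab]
      abel

lemma poly_key (b n m : ℝ) (hb : 0 < b) (hb' : b < 1/2) (hm : 0 ≤ m) (hn : 0 ≤ n)
    (h : (m+1)*(4-2*b) < b*n) :
    ((1-2*b)*n + m)^2 < (1-b)*(n-m)^2 := by
  set s := Real.sqrt (1-b) with hs
  have hb1 : (0:ℝ) < 1 - b := by linarith
  have hs2 : s^2 = 1-b := Real.sq_sqrt hb1.le
  have hs0 : 0 < s := Real.sqrt_pos.mpr hb1
  have hs1 : s < 1 := by nlinarith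
  have hshalf : 1/2 < s := by nlinarith
  have h' : (m+1)*(2+2*s^2) < (1-s^2)*n := by rw [hs2]; linarith
  have key : (1+s)^2 ≤ (2+2*s^2)*(1+2*s) := by nlinarith
  have step1 : m*(1+s) < n*((1-s)*(1+2*s)) := by
    have h1 : m*(1+s)^2 ≤ m*((2+2*s^2)*(1+2*s)) := by
      apply mul_le_mul_of_nonneg_left key hm
    have h2 : (m*(2+2*s^2))*(1+2*s) < ((1-s^2)*n)*(1+2*s) := by
      apply mul_lt_mul_of_pos_right _ (by linarith)
      nlinarith
    have h3 : m*(1+s)^2 < (1-s^2)*n*(1+2*s) := by nlinarith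
    nlinarith [mul_pos hs0 hs0]
  have hpos : 0 ≤ (1-2*b)*n + m := by nlinarith
  have step2 : (1-2*b)*n + m < s*(n-m) := by nlinarith
  calc ((1-2*b)*n + m)^2 < (s*(n-m))^2 := by
        exact pow_lt_pow_left₀ step2 hpos two_ne_zero
    _ = (1-b)*(n-m)^2 := by rw [mul_pow, hs2]

lemma exists_good_pair {N n : ℕ} (b : ℝ) (hb : 0 < b) (hb' : b < 1/2)
    (u : Fin n → EuclideanSpace ℝ (Fin N)) (hu : ∀ i, ‖u i‖ = 1)
    (hsum : ‖∑ i, u i‖ ≤ (1 - 2*b) * n)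
    (S : Finset (Fin n)) (hSbound : ((S.card:ℝ)+1)*(4-2*b) < b*n) :
    ∃ i j : Fin n, i ∉ S ∧ j ∉ S ∧ i ≠ j ∧ ⟪u i, u j⟫ ≤ 1 - b := by
  by_contra hcon
  push_neg at hcon
  set T := Sᶜ with hT
  set m := S.card with hm
  have hmn : m ≤ n := by
    have := S.card_le_univ
    simpa using this
  have htm : (T.card : ℝ) = (n:ℝ) - m := by
    rw [hT, Finset.card_compl]
    rw [Nat.cast_sub (by simpa using hmn)]
    simp [hm]
  -- lower bound on each row sum
  have hdiag : ∀ i ∈ T, (1:ℝ) + (((n:ℝ)-m)-1)*(1-b) ≤ ∑ j ∈ T, ⟪u i, u j⟫ := by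
    intro i hi
    rw [← Finset.add_sum_erase T _ hi]
    have h1 : ⟪u i, u i⟫ = 1 := by
      rw [real_inner_self_eq_norm_sq, hu i]; norm_num
    have h2 : ((T.erase i).card : ℝ) • (1-b) ≤ ∑ j ∈ T.erase i, ⟪u i, u j⟫ := by
      rw [Nat.cast_smul_eq_nsmul ℝ]
      apply Finset.card_nsmul_le_sum
      intro j hjmem
      have hji : j ≠ i := Finset.ne_of_mem_erase hjmem
      have hjT : j ∈ T := Finset.mem_of_mem_erase hjmem
      have hiS : i ∉ S := by rwa [← Finset.mem_compl]
      have hjS : j ∉ S := by rwa [← Finset.mem_compl]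
      exact (hcon i j hiS hjS (hji.symm ∘ Eq.symm ∘ id ∘ Eq.symm)).le
    have h3 : ((T.erase i).card : ℝ) = ((n:ℝ)-m) - 1 := by
      rw [Finset.card_erase_of_mem hi]
      have h4 : 1 ≤ T.card := Finset.card_pos.mpr ⟨i, hi⟩
      rw [Nat.cast_sub h4, htm]
      simp
    rw [h3] at h2
    rw [smul_eq_mul] at h2
    linarith [h1, h2]
  -- lower bound on the norm squared
  have hlow : ((n:ℝ)-m) * (1 + (((n:ℝ)-m)-1)*(1-b)) ≤ ‖∑ i ∈ T, u i‖^2 := by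
    rw [← real_inner_self_eq_norm_sq]
    rw [sum_inner]
    have : ∀ i ∈ T, ⟪u i, ∑ j ∈ T, u j⟫ = ∑ j ∈ T, ⟪u i, u j⟫ := by
      intro i _; rw [inner_sum]
    rw [Finset.sum_congr rfl this]
    calc ((n:ℝ)-m) * (1 + (((n:ℝ)-m)-1)*(1-b))
        = (T.card : ℝ) • (1 + (((n:ℝ)-m)-1)*(1-b)) := by rw [htm, smul_eq_mul]
      _ ≤ ∑ i ∈ T, ∑ j ∈ T, ⟪u i, u j⟫ := by
          rw [Nat.cast_smul_eq_nsmul ℝ]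
          exact Finset.card_nsmul_le_sum T _ _ hdiag
  -- upper bound on the norm
  have hTsum : ∑ i ∈ T, u i = ∑ i, u i - ∑ i ∈ S, u i := by
    rw [eq_sub_iff_add_eq, add_comm, Finset.sum_add_sum_compl S]
  have hSnorm : ‖∑ i ∈ S, u i‖ ≤ (m:ℝ) := by
    calc ‖∑ i ∈ S, u i‖ ≤ ∑ i ∈ S, ‖u i‖ := norm_sum_le S u
      _ = (m:ℝ) := by simp [hu, hm]
  have hup : ‖∑ i ∈ T, u i‖ ≤ (1-2*b)*n + m := by
    rw [hTsum]
    calc ‖∑ i, u i - ∑ i ∈ S, u i‖ ≤ ‖∑ i, u i‖ + ‖∑ i ∈ S, u i‖ := norm_sub_le _ _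
      _ ≤ (1-2*b)*n + m := by linarith
  have hup2 : ‖∑ i ∈ T, u i‖^2 ≤ ((1-2*b)*n + m)^2 := by
    apply pow_le_pow_left₀ (norm_nonneg _) hup
  have hpoly := poly_key b n m hb hb' (Nat.cast_nonneg m) (Nat.cast_nonneg n) hSbound
  have hnm : (0:ℝ) ≤ (n:ℝ) - m := by
    rw [← htm]; positivity
  nlinarith [hlow, hup2, hpoly, mul_nonneg hb.le hnm]

lemma greedy_pairs {N n : ℕ} (b : ℝ) (hb : 0 < b) (hb' : b < 1/2)
    (u : Fin n → EuclideanSpace ℝ (Fin N)) (hu : ∀ i, ‖u i‖ = 1)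
    (hsum : ‖∑ i, u i‖ ≤ (1 - 2*b) * n) :
    ∀ k : ℕ, (2*(k:ℝ)-1)*(4-2*b) < b*n →
      ∃ S : Finset (Fin n), S.card = 2*k ∧ ‖∑ i ∈ S, u i‖ ≤ k * Real.sqrt (4-2*b) := by
  intro k
  induction k with
  | zero => intro _; exact ⟨∅, by simp, by simp⟩
  | succ k ih =>
    intro hk
    have hb4 : (0:ℝ) < 4 - 2*b := by linarith
    have hkcast : (((k:ℝ)+1)) = ((k+1 : ℕ) : ℝ) := by push_cast; ring
    have hk' : (2*(k:ℝ)-1)*(4-2*b) < b*n := by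
      push_cast at hk
      nlinarith
    obtain ⟨S, hScard, hSnorm⟩ := ih hk'
    have hSb : ((S.card:ℝ)+1)*(4-2*b) < b*n := by
      rw [hScard]
      push_cast at hk ⊢
      nlinarith
    obtain ⟨i, j, hiS, hjS, hij, hinner⟩ := exists_good_pair b hb hb' u hu hsum S hSb
    have hjins : j ∉ S := hjS
    have hiins : i ∉ insert j S := by
      simp only [Finset.mem_insert]
      push_neg
      exact ⟨hij, hiS⟩
    refine ⟨insert i (insert j S), ?_, ?_⟩
    · rw [Finset.card_insert_of_notMem hiins, Finset.card_insert_of_notMem hjS, hScard]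
      ring
    · have hpairnorm : ‖u i + u j‖ ≤ Real.sqrt (4-2*b) := by
        have hsq : ‖u i + u j‖^2 ≤ 4 - 2*b := by
          rw [norm_add_sq_real, hu i, hu j]
          nlinarith
        calc ‖u i + u j‖ = Real.sqrt (‖u i + u j‖^2) := by
              rw [Real.sqrt_sq (norm_nonneg _)]
          _ ≤ Real.sqrt (4-2*b) := Real.sqrt_le_sqrt hsq
      rw [Finset.sum_insert hiins, Finset.sum_insert hjS]
      calc ‖u i + (u j + ∑ x ∈ S, u x)‖ = ‖(u i + u j) + ∑ x ∈ S, u x‖ := by rw [add_assoc]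
        _ ≤ ‖u i + u j‖ + ‖∑ x ∈ S, u x‖ := norm_add_le _ _
        _ ≤ Real.sqrt (4-2*b) + k * Real.sqrt (4-2*b) := by linarith
        _ = (k+1 : ℕ) * Real.sqrt (4-2*b) := by push_cast; ring

open Classical in

theorem average_correction_step
    (N n : ℕ) (hN : 2 ≤ N) (hn : 0 < n)
    (b : ℝ) (hb : 0 < b) (hb' : b < 1/2)
    (u : Fin n → EuclideanSpace ℝ (Fin N)) (hu : ∀ i, ‖u i‖ = 1)
    (z : EuclideanSpace ℝ (Fin N)) (hz : ‖z‖ ≤ 1 - 2 * b)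
    (havg : ‖((n : ℝ))⁻¹ • ∑ i, u i‖ ≤ 1 - 2 * b)
    (c : ℝ) (hc : 0 < c) (hcb : Real.sqrt (4 - 2 * b) < 2 - c)
    (η : ℝ) (hη : η = ‖((n : ℝ))⁻¹ • ∑ i, u i - z‖)
    (P : ℕ) (hP : P = ⌊η * n / c⌋₊ + 1)
    (hBn : 2 * (⌊η * n / c⌋₊ : ℝ) + 1 < (b / (4 - 2 * b)) * n) :
    ∃ v : Fin n → EuclideanSpace ℝ (Fin N),
      (∀ i, ‖v i‖ = 1) ∧
      (Finset.univ.filter (fun i : Fin n => v i ≠ u i)).card ≤ 2 * P ∧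
      ((n : ℝ))⁻¹ • ∑ i, v i = z := by
  have hb4 : (0:ℝ) < 4 - 2*b := by linarith
  have hn0 : (0:ℝ) < (n:ℝ) := by exact_mod_cast hn
  have hn' : (n:ℝ) ≠ 0 := ne_of_gt hn0
  -- total sum bound
  have hsum : ‖∑ i, u i‖ ≤ (1 - 2*b) * n := by
    have h1 : ‖((n : ℝ))⁻¹ • ∑ i, u i‖ = (n:ℝ)⁻¹ * ‖∑ i, u i‖ := by
      rw [norm_smul, Real.norm_eq_abs, abs_of_pos (by positivity)]
    rw [h1] at havg
    rw [inv_mul_le_iff₀ hn0] at havg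
    linarith [havg]
  -- bound needed for the greedy lemma
  have hPb : (2*(P:ℝ)-1)*(4-2*b) < b*n := by
    have h2 : (2 * (⌊η * n / c⌋₊ : ℝ) + 1) * (4-2*b) < (b / (4 - 2 * b)) * n * (4-2*b) :=
      mul_lt_mul_of_pos_right hBn hb4
    have h3 : (b / (4 - 2 * b)) * n * (4-2*b) = b * n := by field_simp; exact div_self (by intro h; linarith)
    have h4 : (2*(P:ℝ)-1) = 2 * (⌊η * n / c⌋₊ : ℝ) + 1 := by
      rw [hP]; push_cast; ring
    rw [h4, ← h3]
    exact h2
  obtain ⟨S, hScard, hSnorm⟩ := greedy_pairs b hb hb' u hu hsum P hPb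
  -- the correction vector
  set w : EuclideanSpace ℝ (Fin N) := (n:ℝ) • z - ∑ i ∈ Sᶜ, u i with hw
  have hcompl : ∑ i ∈ S, u i + ∑ i ∈ Sᶜ, u i = ∑ i, u i := Finset.sum_add_sum_compl S u
  have hnz : ‖(n:ℝ) • z - ∑ i, u i‖ = (n:ℝ) * η := by
    rw [hη]
    rw [← norm_sub_rev]
    rw [show ∑ i, u i - (n:ℝ) • z = (n:ℝ) • (((n : ℝ))⁻¹ • ∑ i, u i - z) by
      rw [smul_sub, smul_smul, mul_inv_cancel₀ hn', one_smul]]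
    rw [norm_smul, Real.norm_eq_abs, abs_of_pos hn0]
  have hηnc : η * n < c * P := by
    have := Nat.lt_floor_add_one (η * n / c)
    have h5 : η * n / c < (P:ℝ) := by
      rw [hP]; push_cast; exact this
    rwa [div_lt_iff₀ hc, mul_comm (P:ℝ) c] at h5
  have hP0 : (0:ℝ) ≤ (P:ℝ) := Nat.cast_nonneg P
  have hwnorm : ‖w‖ ≤ 2 * P := by
    have hdecomp : w = ((n:ℝ) • z - ∑ i, u i) + ∑ i ∈ S, u i := by
      rw [hw, ← hcompl]; abel
    calc ‖w‖ ≤ ‖(n:ℝ) • z - ∑ i, u i‖ + ‖∑ i ∈ S, u i‖ := by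
          rw [hdecomp]; exact norm_add_le _ _
      _ ≤ (n:ℝ) * η + (P:ℝ) * Real.sqrt (4-2*b) := by
          rw [hnz]; linarith
      _ ≤ c * P + (P:ℝ) * (2 - c) := by
          have := mul_le_mul_of_nonneg_left hcb.le hP0
          nlinarith [hηnc]
      _ = 2 * P := by ring
  obtain ⟨f, hf1, hf2⟩ := exists_unit_family hN P S w hScard hwnorm
  refine ⟨fun i => if i ∈ S then f i else u i, ?_, ?_, ?_⟩
  · intro i
    by_cases h : i ∈ S
    · simp [h, hf1 i]
    · simp [h, hu i]
  · have hsubset : (Finset.univ.filter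
        (fun i : Fin n => (if i ∈ S then f i else u i) ≠ u i)) ⊆ S := by
      intro i hi
      rw [Finset.mem_filter] at hi
      by_contra h
      exact hi.2 (if_neg h)
    calc _ ≤ S.card := Finset.card_le_card hsubset
      _ = 2 * P := hScard
  · have hsplit : ∑ i, (if i ∈ S then f i else u i) = w + ∑ i ∈ Sᶜ, u i := by
      rw [← Finset.sum_add_sum_compl S]
      congr 1
      · rw [← hf2]
        apply Finset.sum_congr rfl
        intro i hi
        rw [if_pos hi]
      · apply Finset.sum_congr rfl
        intro i hi
        rw [if_neg (by rwa [← Finset.mem_compl])]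
    rw [hsplit, hw]
    rw [sub_add_cancel, smul_smul, inv_mul_cancel₀ hn', one_smul]
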